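/- (Dual projective cross law) Suppose U, V, W are nonzero vectors with a_U, a_V, a_W all nonzero and with all three quantities a_U·a_V − b_{UV}², a_U·a_W − b_{UW}², a_V·a_W − b_{VW}² nonzero. Then the projective quadrance q_w = q(U,V) and the projective spreads S_u, S_v, S_w satisfy (q_w·S_u·S_v − S_u − S_v − S_w + 2)² = 4(1 − S_u)(1 − S_v)(1 − S_w). -/

import Mathlib

set_option maxHeartbeats 2000000 in
private lemma atomic_cross {F : Type*} [Field F] (p2 X2 Y2 Z2 N A C E G : F)
    (hG : G ≠ 0) (hA : A ≠ 0) (hC : C ≠ 0) (hE : E ≠ 0)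
    (hkey : X2 * Y2 * G - p2 * (A * C - X2) * (A * E - Y2) + Z2 * G * A ^ 2
        + 2 * N * G * A = 0)
    (hN : N ^ 2 = X2 * Y2 * Z2) :
    ((1 - p2 / G) * (1 - X2 / (A * C)) * (1 - Y2 / (A * E))
      - (1 - X2 / (A * C)) - (1 - Y2 / (A * E)) - (1 - Z2 / (C * E)) + 2) ^ 2 =
    4 * (1 - (1 - X2 / (A * C))) * (1 - (1 - Y2 / (A * E))) * (1 - (1 - Z2 / (C * E))) := by
  have hAC : A * C ≠ 0 := mul_ne_zero hA hC
  have hAE : A * E ≠ 0 := mul_ne_zero hA hE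
  have hCE : C * E ≠ 0 := mul_ne_zero hC hE
  have hACE : A * C * E ≠ 0 := mul_ne_zero hAC hE
  have h1 : G * (A * C) * (A * E) ≠ 0 := mul_ne_zero (mul_ne_zero hG hAC) hAE
  have h2 : G * (A * C) * (A * E) * (A * C) ≠ 0 := mul_ne_zero h1 hAC
  have h3 : G * (A * C) * (A * E) * (A * C) * (A * E) ≠ 0 := mul_ne_zero h2 hAE
  have h4 : G * (A * C) * (A * E) * (A * C) * (A * E) * (C * E) ≠ 0 := mul_ne_zero h3 hCE
  have h5 : G * (A * C) * (A * E) * (A * C) * (A * E) * (C * E) * (A * C * E) ≠ 0 :=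
    mul_ne_zero h4 hACE
  have hbase : (1 - p2 / G) * (1 - X2 / (A * C)) * (1 - Y2 / (A * E))
      - (1 - X2 / (A * C)) - (1 - Y2 / (A * E)) - (1 - Z2 / (C * E)) + 2
      = -(2 * N / (A * C * E)) := by
    have h : (1 - p2 / G) * (1 - X2 / (A * C)) * (1 - Y2 / (A * E))
        - (1 - X2 / (A * C)) - (1 - Y2 / (A * E)) - (1 - Z2 / (C * E)) + 2
        + 2 * N / (A * C * E)
        = (X2 * Y2 * G - p2 * (A * C - X2) * (A * E - Y2) + Z2 * G * A ^ 2
            + 2 * N * G * A) / (G * A ^ 2 * C * E) := by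
      rw [one_sub_div hG, one_sub_div hAC, one_sub_div hAE, one_sub_div hCE,
        div_mul_div_comm, div_mul_div_comm,
        div_sub_div _ _ h1 hAC, div_sub_div _ _ h2 hAE, div_sub_div _ _ h3 hCE,
        div_add' _ _ _ h4, div_add_div _ _ h4 hACE,
        div_eq_div_iff h5 (mul_ne_zero (mul_ne_zero (mul_ne_zero hG (pow_ne_zero 2 hA)) hC) hE)]
      ring
    rw [hkey, zero_div] at h
    linear_combination h
  rw [hbase]
  rw [sub_sub_cancel, sub_sub_cancel, sub_sub_cancel]
  field_simp
  linear_combination 4 * hN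

/-- The projective quadrance between the projective points `[U]` and `[V]`. -/
def projQuadrance {F : Type*} [Field F] {M : Type*} [AddCommGroup M] [Module F M]
    (B : LinearMap.BilinForm F M) (U V : M) : F :=
  1 - (B U V) ^ 2 / (B U U * B V V)

/-- The projective spread between the projective lines `WU` and `WV`
(the spread at the vertex `[W]`). -/
def projSpread {F : Type*} [Field F] {M : Type*} [AddCommGroup M] [Module F M]
    (B : LinearMap.BilinForm F M) (W U V : M) : F :=
  1 - (B W W * B U V - B U W * B V W) ^ 2 /
      ((B U U * B W W - (B U W) ^ 2) * (B V V * B W W - (B V W) ^ 2))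

set_option maxHeartbeats 2000000 in
theorem dual_projective_cross_law
    {F : Type*} [Field F] (hchar : (2 : F) ≠ 0)
    {M : Type*} [AddCommGroup M] [Module F M]
    (B : LinearMap.BilinForm F M) (hsym : ∀ x y : M, B x y = B y x)
    (U V W : M) (hU : U ≠ 0) (hV : V ≠ 0) (hW : W ≠ 0)
    (haU : B U U ≠ 0) (haV : B V V ≠ 0) (haW : B W W ≠ 0)
    (hdUV : B U U * B V V - (B U V) ^ 2 ≠ 0)
    (hdUW : B U U * B W W - (B U W) ^ 2 ≠ 0)
    (hdVW : B V V * B W W - (B V W) ^ 2 ≠ 0)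
 :
    (projQuadrance B U V * projSpread B U V W * projSpread B V U W -
        projSpread B U V W - projSpread B V U W - projSpread B W U V + 2) ^ 2 =
      4 * (1 - projSpread B U V W) * (1 - projSpread B V U W) *
        (1 - projSpread B W U V) := by
  unfold projQuadrance projSpread
  rw [hsym V U, hsym W U, hsym W V,
    mul_comm (B V V) (B U U), mul_comm (B W W) (B U U), mul_comm (B W W) (B V V)]
  exact atomic_cross ((B U V) ^ 2)
    ((B U U * B V W - B U V * B U W) ^ 2)
    ((B V V * B U W - B U V * B V W) ^ 2)
    ((B W W * B U V - B U W * B V W) ^ 2)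
    ((B U U * B V W - B U V * B U W) * (B V V * B U W - B U V * B V W) *
      (B W W * B U V - B U W * B V W))
    (B U U * B V V - (B U V) ^ 2) (B U U * B W W - (B U W) ^ 2)
    (B V V * B W W - (B V W) ^ 2) (B U U * B V V)
    (mul_ne_zero haU haV) hdUV hdUW hdVW (by ring) (by ring)
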